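/- For all x in the open interval (0,1), it holds that 1/√(2(1−x)) − 1 ≤ 1/arccos(x) ≤ 1/√(2(1−x)). -/

import Mathlib

theorem arccos_inv_bounds (x : ℝ) (hx : x ∈ Set.Ioo (0 : ℝ) 1) :
    1 / Real.sqrt (2 * (1 - x)) - 1 ≤ 1 / Real.arccos x ∧
      1 / Real.arccos x ≤ 1 / Real.sqrt (2 * (1 - x)) := by
  obtain ⟨hx0, hx1⟩ := hx
  set θ := Real.arccos x with hθdef
  have hθpos : 0 < θ := Real.arccos_pos.mpr hx1
  have hθle : θ ≤ Real.pi / 2 := Real.arccos_le_pi_div_two.mpr hx0.le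
  have hθ2 : θ ≤ 2 := hθle.trans (by linarith [Real.pi_le_four])
  have hcos : Real.cos θ = x := Real.cos_arccos (by linarith) hx1.le
  have hsinpos : 0 < Real.sin (θ / 2) :=
    Real.sin_pos_of_pos_of_lt_pi (by linarith) (by nlinarith [Real.pi_gt_three])
  -- identity: √(2(1-x)) = 2 sin(θ/2)
  have hsq : Real.sin (θ / 2) ^ 2 = 1 / 2 - Real.cos θ / 2 := by
    have h2 := Real.cos_sq (θ / 2)
    rw [show 2 * (θ / 2) = θ by ring] at h2
    have h3 := Real.sin_sq_add_cos_sq (θ / 2)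
    linarith
  set s := Real.sqrt (2 * (1 - x)) with hsdef
  have hs : s = 2 * Real.sin (θ / 2) := by
    rw [hsdef, show (2 : ℝ) * (1 - x) = (2 * Real.sin (θ / 2)) ^ 2 by
      rw [← hcos]; nlinarith [hsq]]
    exact Real.sqrt_sq (by positivity)
  have hspos : 0 < s := by rw [hs]; positivity
  -- s ≤ θ
  have hsle : s ≤ θ := by
    have := Real.sin_lt (show (0:ℝ) < θ / 2 by linarith)
    rw [hs]; linarith
  constructor
  · -- lower bound: 1/s - 1 ≤ 1/θ, i.e. θ - s ≤ s * θ
    have hcube : θ / 2 - (θ / 2) ^ 3 / 4 < Real.sin (θ / 2) :=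
      by have := Real.sin_gt_sub_cube (x := θ / 2) (by linarith); nlinarith [pow_pos (show (0:ℝ) < θ / 2 by linarith) 3]
    have hslb : θ - θ ^ 3 / 16 ≤ s := by rw [hs]; nlinarith
    have hkey : θ - s ≤ s * θ := by
      nlinarith [mul_le_mul_of_nonneg_right hslb hθpos.le,
        mul_nonneg (mul_nonneg hθpos.le hθpos.le) (by linarith : (0:ℝ) ≤ 2 - θ)]
    have h1 : 1 / s - 1 / θ ≤ 1 := by
      rw [div_sub_div _ _ hspos.ne' hθpos.ne', div_le_one (by positivity)]
      nlinarith
    linarith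
  · exact one_div_le_one_div_of_le hspos hsle
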